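/- Let E be a skew left brace of abelian type with an ideal I = I₁ × ⋯ × I_r, each I_j an ideal of E, and r ≥ 2. Then E splits over I if and only if for some (equivalently any) pair k ≠ m, the quotient E/I_k splits over I/I_k and E/I_m splits over I/I_m. -/

import Mathlib

/-- A skew left brace: a set with two group structures `(A, +)` and `(A, ∘)`
(here `∘` is `circ`, with inverse `sinv`) satisfying
`a ∘ (b + c) = (a ∘ b) - a + (a ∘ c)`. -/
class SkewBrace (A : Type*) extends AddGroup A where
  circ : A → A → A
  circ_assoc : ∀ a b c : A, circ (circ a b) c = circ a (circ b c)
  zero_circ : ∀ a : A, circ 0 a = a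
  circ_zero : ∀ a : A, circ a 0 = a
  sinv : A → A
  circ_sinv : ∀ a : A, circ a (sinv a) = 0
  sinv_circ : ∀ a : A, circ (sinv a) a = 0
  compat : ∀ a b c : A, circ a (b + c) = circ a b + -a + circ a c

namespace SkewBrace

variable {A : Type*} [SkewBrace A]

/-- The lambda map `λ_a(b) = -a + (a ∘ b)`. -/
def lam (a b : A) : A := -a + circ a b

/-- `S` is (the carrier of) a sub-skew brace: a subgroup of both `(A,+)` and `(A,∘)`. -/
def IsSub (S : Set A) : Prop :=
  (0 : A) ∈ S ∧ (∀ a ∈ S, ∀ b ∈ S, a + b ∈ S) ∧ (∀ a ∈ S, -a ∈ S) ∧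
    (∀ a ∈ S, ∀ b ∈ S, circ a b ∈ S) ∧ (∀ a ∈ S, sinv a ∈ S)

/-- `S` is (the carrier of) an ideal: a sub-skew brace normal in both group
structures and invariant under all `λ_a`. -/
def IsIdeal (S : Set A) : Prop :=
  IsSub S ∧ (∀ a : A, ∀ x ∈ S, -a + x + a ∈ S) ∧
    (∀ a : A, ∀ x ∈ S, circ (sinv a) (circ x a) ∈ S) ∧
    (∀ a : A, ∀ x ∈ S, lam a x ∈ S)

/-- A skew brace homomorphism: preserves both operations. -/
def IsHom {B : Type*} [SkewBrace B] (f : A → B) : Prop :=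
  (∀ x y : A, f (x + y) = f x + f y) ∧ ∀ x y : A, f (circ x y) = circ (f x) (f y)

/-- Multiplication of the semidirect product group `Λ_A = (A,+) ⋊_λ (A,∘)`. -/
def lmul (p q : A × A) : A × A := (p.1 + lam p.2 q.1, circ p.2 q.2)

end SkewBrace

open SkewBrace
/-- `E/J` splits over `I/J` (for ideals `J ⊆ I` of `E`), expressed inside `E`. -/
def SkewBrace.RelSplit {E : Type*} [SkewBrace E] (I J : Set E) : Prop :=
  ∃ G : Set E, IsSub G ∧ J ⊆ G ∧ (∀ e : E, ∃ g ∈ G, ∃ x ∈ I, e = g + x) ∧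
    G ∩ I ⊆ J

namespace SB17
open SkewBrace

variable {E : Type*} [SkewBrace E]

private abbrev acg (hcomm : ∀ a b : E, a + b = b + a) : AddCommGroup E :=
  { (inferInstance : AddGroup E) with add_comm := hcomm }

lemma lam_zero (a : E) : lam a 0 = 0 := by simp [lam, SkewBrace.circ_zero]

lemma zero_lam (a : E) : lam 0 a = a := by simp [lam, SkewBrace.zero_circ]

lemma circ_eq (a b : E) : circ a b = a + lam a b := by simp [lam]

lemma lam_add (a b c : E) : lam a (b + c) = lam a b + lam a c := by
  simp [lam, SkewBrace.compat, add_assoc]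

lemma lam_neg (a b : E) : lam a (-b) = -lam a b := by
  have h := lam_add a b (-b)
  rw [add_neg_cancel, lam_zero] at h
  exact (neg_eq_of_add_eq_zero_right h.symm).symm

lemma circ_neg (a b : E) : circ a (-b) = a - circ a b + a := by
  have h := SkewBrace.compat a b (-b)
  rw [add_neg_cancel, SkewBrace.circ_zero] at h
  calc circ a (-b) = -(circ a b + -a) + (circ a b + -a + circ a (-b)) := by
        rw [neg_add_cancel_left]
    _ = -(circ a b + -a) + a := by rw [← h]
    _ = a - circ a b + a := by rw [neg_add_rev, neg_neg, sub_eq_add_neg, add_assoc]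

lemma lam_circ (hcomm : ∀ a b : E, a + b = b + a) (a b c : E) :
    lam (circ a b) c = lam a (lam b c) := by
  letI := acg hcomm
  unfold lam
  rw [SkewBrace.compat a (-b) (circ b c), circ_neg, ← SkewBrace.circ_assoc]
  abel

lemma sinv_unique {x y : E} (h : circ y x = 0) : y = sinv x := by
  have h2 : circ (circ y x) (sinv x) = circ 0 (sinv x) := by rw [h]
  rwa [SkewBrace.circ_assoc, SkewBrace.circ_sinv, SkewBrace.circ_zero,
    SkewBrace.zero_circ] at h2

lemma sinv_sinv (a : E) : sinv (sinv a) = a := (sinv_unique (SkewBrace.circ_sinv a)).symm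

lemma sinv_circ_rev (a b : E) : sinv (circ a b) = circ (sinv b) (sinv a) := by
  refine (sinv_unique ?_).symm
  rw [SkewBrace.circ_assoc, ← SkewBrace.circ_assoc (sinv a) a b, SkewBrace.sinv_circ,
    SkewBrace.zero_circ, SkewBrace.sinv_circ]

lemma lam_lam_sinv (hcomm : ∀ a b : E, a + b = b + a) (a b : E) :
    lam a (lam (sinv a) b) = b := by
  rw [← lam_circ hcomm, SkewBrace.circ_sinv, zero_lam]

lemma add_eq_circ (hcomm : ∀ a b : E, a + b = b + a) (a x : E) :
    a + x = circ a (lam (sinv a) x) := by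
  rw [circ_eq, lam_lam_sinv hcomm]

lemma sinv_eq_neg_lam (a : E) : sinv a = -lam (sinv a) a := by
  have h : circ (sinv a) a = 0 := SkewBrace.sinv_circ a
  rw [circ_eq] at h
  exact eq_neg_of_add_eq_zero_left h

lemma conj_formula (hcomm : ∀ a b : E, a + b = b + a) (a x : E) :
    circ (sinv a) (circ x a) = lam (sinv a) x + lam (sinv a) (lam x a - a) := by
  letI := acg hcomm
  rw [circ_eq x a, circ_eq (sinv a) (x + lam x a), lam_add, sub_eq_add_neg, lam_add,
    lam_neg]
  nth_rewrite 1 [sinv_eq_neg_lam a]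
  abel

lemma key_single (hcomm : ∀ a b : E, a + b = b + a) {J : Set E} (hJ : IsIdeal J)
    {x : E} (hx : x ∈ J) (a : E) : lam x a - a ∈ J := by
  letI := acg hcomm
  have hw : circ (sinv a) (circ x a) ∈ J := hJ.2.2.1 a x hx
  have h2 : circ x a = a + lam a (circ (sinv a) (circ x a)) := by
    rw [← circ_eq, ← SkewBrace.circ_assoc, SkewBrace.circ_sinv, SkewBrace.zero_circ]
  have h3 : lam x a - a = -x + lam a (circ (sinv a) (circ x a)) := by
    conv_lhs => rw [lam, h2]
    abel
  rw [h3]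
  exact hJ.1.2.1 _ (hJ.1.2.2.1 _ hx) _ (hJ.2.2.2 _ _ hw)

lemma ideal_of (hcomm : ∀ a b : E, a + b = b + a) {B : Set E} (h0 : (0:E) ∈ B)
    (hadd : ∀ a ∈ B, ∀ b ∈ B, a + b ∈ B) (hneg : ∀ a ∈ B, -a ∈ B)
    (hlam : ∀ a : E, ∀ x ∈ B, lam a x ∈ B)
    (hkey : ∀ x ∈ B, ∀ a : E, lam x a - a ∈ B) : IsIdeal B := by
  have hcirc : ∀ a ∈ B, ∀ b ∈ B, circ a b ∈ B := fun a ha b hb => by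
    rw [circ_eq]; exact hadd _ ha _ (hlam a b hb)
  have hsinv : ∀ a ∈ B, sinv a ∈ B := fun a ha => by
    rw [sinv_eq_neg_lam]; exact hneg _ (hlam _ _ ha)
  refine ⟨⟨h0, hadd, hneg, hcirc, hsinv⟩, ?_, ?_, fun a x hx => hlam a x hx⟩
  · intro a x hx
    have h : -a + x + a = x := by letI := acg hcomm; abel
    rwa [h]
  · intro a x hx
    rw [conj_formula hcomm]
    exact hadd _ (hlam _ _ hx) _ (hlam _ _ (hkey x hx a))

/-- `G + J` for a sub `G` and ideal `J` is a sub. -/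
lemma sub_sumset (hcomm : ∀ a b : E, a + b = b + a) {G J : Set E}
    (hG : IsSub G) (hJ : IsIdeal J) :
    IsSub {e : E | ∃ g ∈ G, ∃ x ∈ J, e = g + x} := by
  letI := acg hcomm
  obtain ⟨G0, Gadd, Gneg, Gcirc, Gsinv⟩ := hG
  obtain ⟨⟨J0, Jadd, Jneg, Jcirc, Jsinv⟩, Jnorm, Jcnorm, Jlam⟩ := hJ
  have mem_iff : ∀ g ∈ G, ∀ u ∈ J, circ g u ∈ {e : E | ∃ g ∈ G, ∃ x ∈ J, e = g + x} := by
    intro g hg u hu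
    exact ⟨g, hg, lam g u, Jlam g u hu, circ_eq g u⟩
  have decomp : ∀ g x : E, x ∈ J → g + x = circ g (lam (sinv g) x) :=
    fun g x _ => add_eq_circ hcomm g x
  refine ⟨⟨0, G0, 0, J0, by abel⟩, ?_, ?_, ?_, ?_⟩
  · rintro - ⟨g, hg, x, hx, rfl⟩ - ⟨g', hg', x', hx', rfl⟩
    exact ⟨g + g', Gadd _ hg _ hg', x + x', Jadd _ hx _ hx', by abel⟩
  · rintro - ⟨g, hg, x, hx, rfl⟩
    exact ⟨-g, Gneg _ hg, -x, Jneg _ hx, by abel⟩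
  · rintro - ⟨g, hg, x, hx, rfl⟩ - ⟨g', hg', x', hx', rfl⟩
    set u := lam (sinv g) x with hu_def
    have hu : u ∈ J := Jlam _ _ hx
    set u' := lam (sinv g') x' with hu'_def
    have hu' : u' ∈ J := Jlam _ _ hx'
    have w1 : circ (sinv g') (circ u g') ∈ J := Jcnorm g' u hu
    have e1 : circ u g' = circ g' (circ (sinv g') (circ u g')) := by
      rw [← SkewBrace.circ_assoc, SkewBrace.circ_sinv, SkewBrace.zero_circ]
    have step : circ (g + x) (g' + x') =
        circ (circ g g') (circ (circ (sinv g') (circ u g')) u') := by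
      calc circ (g + x) (g' + x') = circ (circ g u) (circ g' u') := by
            rw [decomp g x hx, decomp g' x' hx']
        _ = circ (circ (circ g u) g') u' := by rw [← SkewBrace.circ_assoc]
        _ = circ (circ g (circ u g')) u' := by rw [SkewBrace.circ_assoc g u g']
        _ = circ (circ g (circ g' (circ (sinv g') (circ u g')))) u' :=
            congrArg (fun t => circ (circ g t) u') e1
        _ = circ (circ (circ g g') (circ (sinv g') (circ u g'))) u' := by
            rw [← SkewBrace.circ_assoc g g']
        _ = circ (circ g g') (circ (circ (sinv g') (circ u g')) u') := by
            rw [SkewBrace.circ_assoc]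
    rw [step]
    exact mem_iff _ (Gcirc _ hg _ hg') _ (Jcirc _ w1 _ hu')
  · rintro - ⟨g, hg, x, hx, rfl⟩
    set u := lam (sinv g) x with hu_def
    have hu : u ∈ J := Jlam _ _ hx
    have w2 : circ (sinv (sinv g)) (circ (sinv u) (sinv g)) ∈ J :=
      Jcnorm (sinv g) (sinv u) (Jsinv _ hu)
    have : sinv (g + x) = circ (sinv g) (circ (sinv (sinv g)) (circ (sinv u) (sinv g))) := by
      rw [decomp g x hx, sinv_circ_rev, ← SkewBrace.circ_assoc, SkewBrace.circ_sinv,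
        SkewBrace.zero_circ]
    rw [this]
    exact mem_iff _ (Gsinv _ hg) _ w2

/-- Sum of the ideals `Ij j`, `j ≠ k`: elements admitting a decomposition whose
`k`-th component vanishes. -/
def Bset {r : ℕ} (Ij : Fin r → Set E) (k : Fin r) : Set E :=
  {x | ∃ f : Fin r → E, (∀ j, f j ∈ Ij j) ∧ f k = 0 ∧ x = (List.ofFn f).sum}

section Bset

variable (hcomm : ∀ a b : E, a + b = b + a) {r : ℕ} {Ij : Fin r → Set E}
  (hIj : ∀ j, IsIdeal (Ij j)) {k : Fin r}

include hcomm hIj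

lemma Bset_zero : (0 : E) ∈ Bset Ij k := by
  letI := acg hcomm
  exact ⟨fun _ => 0, fun j => (hIj j).1.1, rfl, by simp [Fin.sum_ofFn]⟩

lemma Bset_single {j : Fin r} (hj : j ≠ k) {y : E} (hy : y ∈ Ij j) : y ∈ Bset Ij k := by
  letI := acg hcomm
  refine ⟨fun i => if i = j then y else 0, ?_, ?_, ?_⟩
  · intro i
    by_cases h : i = j
    · subst h; simpa using hy
    · simp [h, (hIj i).1.1]
  · simp [Ne.symm hj]
  · rw [Fin.sum_ofFn, Fintype.sum_ite_eq']

lemma Bset_add {x y : E} (hx : x ∈ Bset Ij k) (hy : y ∈ Bset Ij k) :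
    x + y ∈ Bset Ij k := by
  letI := acg hcomm
  obtain ⟨f, hf, hfk, rfl⟩ := hx
  obtain ⟨g, hg, hgk, rfl⟩ := hy
  refine ⟨fun j => f j + g j, fun j => (hIj j).1.2.1 _ (hf j) _ (hg j), by show f k + g k = 0; rw [hfk, hgk, add_zero], ?_⟩
  simp [Fin.sum_ofFn, Finset.sum_add_distrib]

lemma Bset_neg {x : E} (hx : x ∈ Bset Ij k) : -x ∈ Bset Ij k := by
  letI := acg hcomm
  obtain ⟨f, hf, hfk, rfl⟩ := hx
  refine ⟨fun j => -f j, fun j => (hIj j).1.2.2.1 _ (hf j), by show -f k = 0; rw [hfk, neg_zero], ?_⟩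
  simp [Fin.sum_ofFn]

lemma Bset_lam (c : E) {x : E} (hx : x ∈ Bset Ij k) : lam c x ∈ Bset Ij k := by
  letI := acg hcomm
  obtain ⟨f, hf, hfk, rfl⟩ := hx
  refine ⟨fun j => lam c (f j), fun j => (hIj j).2.2.2 _ _ (hf j), by show lam c (f k) = 0; rw [hfk, lam_zero], ?_⟩
  rw [Fin.sum_ofFn, Fin.sum_ofFn]
  exact map_sum (AddMonoidHom.mk' (lam c) (lam_add c)) f Finset.univ

lemma Bset_key_list : ∀ l : List E, (∀ y ∈ l, ∃ j, j ≠ k ∧ y ∈ Ij j) →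
    ∀ a : E, lam l.sum a - a ∈ Bset Ij k := by
  letI := acg hcomm
  intro l
  induction l with
  | nil =>
    intro _ a
    simp only [List.sum_nil, zero_lam, sub_self]
    exact Bset_zero hcomm hIj
  | cons y l ih =>
    intro hl a
    obtain ⟨j, hjk, hyj⟩ := hl y (List.mem_cons_self)
    have hl' : ∀ z ∈ l, ∃ j, j ≠ k ∧ z ∈ Ij j := fun z hz => hl z (List.mem_cons_of_mem _ hz)
    set s := l.sum with hs
    have hy' : lam (sinv s) y ∈ Ij j := (hIj j).2.2.2 _ _ hyj
    have e1 : (y :: l).sum = circ s (lam (sinv s) y) := by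
      rw [List.sum_cons, hcomm, add_eq_circ hcomm]
    have e2 : lam ((y :: l).sum) a - a =
        (lam s (lam (lam (sinv s) y) a) - lam (lam (sinv s) y) a) +
          (lam (lam (sinv s) y) a - a) := by
      rw [e1, lam_circ hcomm]; abel
    rw [e2]
    refine Bset_add hcomm hIj (ih hl' _) ?_
    exact Bset_single hcomm hIj hjk (key_single hcomm (hIj j) hy' a)

lemma Bset_key (k' : Fin r) (hk' : k' ≠ k) {x : E} (hx : x ∈ Bset Ij k) (a : E) :
    lam x a - a ∈ Bset Ij k := by
  obtain ⟨f, hf, hfk, rfl⟩ := hx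
  refine Bset_key_list hcomm hIj (List.ofFn f) ?_ a
  intro y hy
  obtain ⟨i, rfl⟩ := List.mem_ofFn.mp hy
  by_cases h : i = k
  · subst h
    exact ⟨k', hk', by rw [hfk]; exact (hIj k').1.1⟩
  · exact ⟨i, h, hf i⟩

lemma Bset_ideal (k' : Fin r) (hk' : k' ≠ k) : IsIdeal (Bset Ij k) :=
  ideal_of hcomm (Bset_zero hcomm hIj) (fun _ ha _ hb => Bset_add hcomm hIj ha hb)
    (fun _ ha => Bset_neg hcomm hIj ha) (fun c _ hx => Bset_lam hcomm hIj c hx)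
    (fun _ hx a => Bset_key hcomm hIj k' hk' hx a)

omit hcomm hIj in
lemma Bset_subset {I : Set E} (hI : IsIdeal I) (hsub : ∀ j, Ij j ⊆ I) :
    Bset Ij k ⊆ I := by
  rintro - ⟨f, hf, -, rfl⟩
  have : ∀ l : List E, (∀ y ∈ l, y ∈ I) → l.sum ∈ I := by
    intro l
    induction l with
    | nil => intro _; simpa using hI.1.1
    | cons y l ih =>
      intro h
      rw [List.sum_cons]
      exact hI.1.2.1 _ (h y (List.mem_cons_self)) _ (ih fun z hz => h z (List.mem_cons_of_mem _ hz))
  refine this _ fun y hy => ?_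
  obtain ⟨i, rfl⟩ := List.mem_ofFn.mp hy
  exact hsub i (hf i)

lemma Bset_span {I : Set E}
    (hspan : ∀ x ∈ I, ∃ f : Fin r → E, (∀ j, f j ∈ Ij j) ∧ x = (List.ofFn f).sum)
    {x : E} (hx : x ∈ I) : ∃ a ∈ Ij k, ∃ b ∈ Bset Ij k, x = a + b := by
  letI := acg hcomm
  obtain ⟨f, hf, rfl⟩ := hspan x hx
  refine ⟨f k, hf k, (List.ofFn (Function.update f k 0)).sum,
    ⟨Function.update f k 0, ?_, ?_, rfl⟩, ?_⟩
  · intro j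
    by_cases h : j = k
    · subst h; simpa using (hIj j).1.1
    · simpa [Function.update_of_ne h] using hf j
  · simp
  · rw [Fin.sum_ofFn, Fin.sum_ofFn, Finset.sum_update_of_mem (Finset.mem_univ k), zero_add,
      ← Finset.add_sum_erase _ f (Finset.mem_univ k), Finset.erase_eq]

lemma Bset_disj
    (huniq : ∀ f g : Fin r → E, (∀ j, f j ∈ Ij j) → (∀ j, g j ∈ Ij j) →
      (List.ofFn f).sum = (List.ofFn g).sum → f = g)
    {x : E} (hxk : x ∈ Ij k) (hxB : x ∈ Bset Ij k) : x = 0 := by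
  letI := acg hcomm
  obtain ⟨f, hf, hfk, hsum⟩ := hxB
  have hg : ∀ j, (if j = k then x else 0) ∈ Ij j := by
    intro j
    by_cases h : j = k
    · subst h; simpa using hxk
    · simp [h, (hIj j).1.1]
  have hgs : (List.ofFn fun j => if j = k then x else 0).sum = x := by
    rw [Fin.sum_ofFn, Fintype.sum_ite_eq']
  have := huniq f (fun j => if j = k then x else 0) hf hg (by rw [hgs, ← hsum])
  have hk := congrFun this k
  simp only [if_pos rfl] at hk
  simpa [hfk] using hk.symm

end Bset

lemma easy_dir (hcomm : ∀ a b : E, a + b = b + a) {I J : Set E} (hI : IsIdeal I)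
    (hJ : IsIdeal J) (hJI : J ⊆ I) (h : RelSplit I {0}) : RelSplit I J := by
  obtain ⟨G, hG, -, hsur, hint⟩ := h
  refine ⟨{e : E | ∃ g ∈ G, ∃ x ∈ J, e = g + x}, sub_sumset hcomm hG hJ, ?_, ?_, ?_⟩
  · intro x hx
    exact ⟨0, hG.1, x, hx, (zero_add x).symm⟩
  · intro e
    obtain ⟨g, hg, x, hx, rfl⟩ := hsur e
    exact ⟨g, ⟨g, hg, 0, hJ.1.1, (add_zero g).symm⟩, x, hx, rfl⟩
  · rintro - ⟨⟨g, hg, y, hy, rfl⟩, heI⟩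
    have hgI : g ∈ I := by
      have h2 := hI.1.2.1 _ heI _ (hI.1.2.2.1 _ (hJI hy))
      rwa [add_neg_cancel_right] at h2
    have hg0 : g = 0 := hint ⟨hg, hgI⟩
    rw [hg0, zero_add]
    exact hy

lemma hard_dir (hcomm : ∀ a b : E, a + b = b + a) {r : ℕ} {Ij : Fin r → Set E}
    {k m : Fin r} (hkm : k ≠ m) {I : Set E} (hI : IsIdeal I)
    (hIj : ∀ j, IsIdeal (Ij j)) (hsub : ∀ j, Ij j ⊆ I)
    (hspan : ∀ x ∈ I, ∃ f : Fin r → E, (∀ j, f j ∈ Ij j) ∧ x = (List.ofFn f).sum)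
    (huniq : ∀ f g : Fin r → E, (∀ j, f j ∈ Ij j) → (∀ j, g j ∈ Ij j) →
      (List.ofFn f).sum = (List.ofFn g).sum → f = g)
    (hk : RelSplit I (Ij k)) (hm : RelSplit I (Ij m)) : RelSplit I {0} := by
  letI := acg hcomm
  have hmk : m ≠ k := hkm.symm
  have hBideal : IsIdeal (Bset Ij k) := Bset_ideal hcomm hIj m hmk
  obtain ⟨G₁, hG₁, hkG₁, hsur₁, hint₁⟩ := hk
  obtain ⟨G₂, hG₂, -, hsur₂, hint₂⟩ := hm
  have hG₂' := sub_sumset hcomm hG₂ hBideal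
  refine ⟨G₁ ∩ {e : E | ∃ g ∈ G₂, ∃ x ∈ Bset Ij k, e = g + x}, ?_, ?_, ?_, ?_⟩
  · exact ⟨⟨hG₁.1, hG₂'.1⟩,
      fun a ha b hb => ⟨hG₁.2.1 _ ha.1 _ hb.1, hG₂'.2.1 _ ha.2 _ hb.2⟩,
      fun a ha => ⟨hG₁.2.2.1 _ ha.1, hG₂'.2.2.1 _ ha.2⟩,
      fun a ha b hb => ⟨hG₁.2.2.2.1 _ ha.1 _ hb.1, hG₂'.2.2.2.1 _ ha.2 _ hb.2⟩,
      fun a ha => ⟨hG₁.2.2.2.2 _ ha.1, hG₂'.2.2.2.2 _ ha.2⟩⟩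
  · rintro x rfl
    exact ⟨hG₁.1, hG₂'.1⟩
  · intro e
    obtain ⟨g₁, hg₁, x, hx, rfl⟩ := hsur₁ e
    obtain ⟨g₂, hg₂, y, hy, hg1eq⟩ := hsur₂ g₁
    obtain ⟨a, ha, b, hb, hyab⟩ := Bset_span hcomm hIj hspan hy
    have hmem₁ : g₂ + b ∈ G₁ := by
      have he : g₂ + b = g₁ + -a := by rw [hg1eq, hyab]; abel
      rw [he]
      exact hG₁.2.1 _ hg₁ _ (hG₁.2.2.1 _ (hkG₁ ha))
    refine ⟨g₂ + b, ⟨hmem₁, ⟨g₂, hg₂, b, hb, rfl⟩⟩, a + x,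
      hI.1.2.1 _ (hsub k ha) _ hx, ?_⟩
    rw [hg1eq, hyab]; abel
  · rintro - ⟨⟨heG₁, g₂, hg₂, b, hb, rfl⟩, heI⟩
    have hbI : b ∈ I := Bset_subset hI hsub hb
    have hg₂I : g₂ ∈ I := by
      have h2 := hI.1.2.1 _ heI _ (hI.1.2.2.1 _ hbI)
      rwa [add_neg_cancel_right] at h2
    have hg₂m : g₂ ∈ Ij m := hint₂ ⟨hg₂, hg₂I⟩
    have heB : g₂ + b ∈ Bset Ij k :=
      Bset_add hcomm hIj (Bset_single hcomm hIj hmk hg₂m) hb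
    have hek : g₂ + b ∈ Ij k := hint₁ ⟨heG₁, heI⟩
    exact Bset_disj hcomm hIj huniq hek heB

end SB17

/-- with `I = I₁ × ⋯ × I_r`, `r ≥ 2`, `E` splits over `I` iff for
some (equivalently any) pair `k ≠ m`, `E/I_k` splits over `I/I_k` and `E/I_m`
splits over `I/I_m`. -/
theorem stmt_17 {E : Type*} [SkewBrace E] (hcomm : ∀ a b : E, a + b = b + a)
    (r : ℕ) (hr : 2 ≤ r) (I : Set E) (Ij : Fin r → Set E)
    (hI : IsIdeal I) (hIj : ∀ j, IsIdeal (Ij j))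
    (hsub : ∀ j, Ij j ⊆ I)
    (hspan : ∀ x ∈ I, ∃ f : Fin r → E, (∀ j, f j ∈ Ij j) ∧ x = (List.ofFn f).sum)
    (huniq : ∀ f g : Fin r → E, (∀ j, f j ∈ Ij j) → (∀ j, g j ∈ Ij j) →
      (List.ofFn f).sum = (List.ofFn g).sum → f = g) :
    (SkewBrace.RelSplit I {0} ↔
      ∃ k m : Fin r, k ≠ m ∧
        SkewBrace.RelSplit I (Ij k) ∧ SkewBrace.RelSplit I (Ij m)) ∧
    (SkewBrace.RelSplit I {0} ↔
      ∀ k m : Fin r, k ≠ m →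
        SkewBrace.RelSplit I (Ij k) ∧ SkewBrace.RelSplit I (Ij m)) := by
  have easy_all : SkewBrace.RelSplit I {0} → ∀ j, SkewBrace.RelSplit I (Ij j) :=
    fun h j => SB17.easy_dir hcomm hI (hIj j) (hsub j) h
  have hard' : ∀ k m : Fin r, k ≠ m → SkewBrace.RelSplit I (Ij k) →
      SkewBrace.RelSplit I (Ij m) → SkewBrace.RelSplit I {0} :=
    fun k m hkm h1 h2 => SB17.hard_dir hcomm hkm hI hIj hsub hspan huniq h1 h2
  have k0 : Fin r := ⟨0, by omega⟩
  have hne : (⟨0, by omega⟩ : Fin r) ≠ (⟨1, by omega⟩ : Fin r) := by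
    simp [Fin.ext_iff]
  constructor
  · constructor
    · intro h
      exact ⟨_, _, hne, easy_all h _, easy_all h _⟩
    · rintro ⟨k, m, hkm, h1, h2⟩
      exact hard' k m hkm h1 h2
  · constructor
    · intro h k m _
      exact ⟨easy_all h k, easy_all h m⟩
    · intro h
      obtain ⟨h1, h2⟩ := h _ _ hne
      exact hard' _ _ hne h1 h2
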